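/- Let D be a 4-Ore digraph obtained from a copy J of the bidirected K4 by successive Ore-compositions with 4-Ore digraphs, vertices and digons of J always on the digon side, and let v be a vertex of J. Then in every 3-dicolouring of D − v, the vertices of J − v receive pairwise distinct colours. -/
import Mathlib


/-- A (finite) digraph on vertices drawn from `ℕ`. -/
structure Dgr where
  verts : Finset ℕ
  Adj : ℕ → ℕ → Prop
  adj_mem : ∀ ⦃u v : ℕ⦄, Adj u v → u ∈ verts ∧ v ∈ verts
  adj_irrefl : ∀ v, ¬ Adj v v

namespace Dgr

/-- number of vertices -/
def nV (D : Dgr) : ℕ := D.verts.card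

/-- number of arcs -/
noncomputable def nA (D : Dgr) : ℕ := {p : ℕ × ℕ | D.Adj p.1 p.2}.ncard

/-- subdigraph relation -/
def Subd (H D : Dgr) : Prop := H.verts ⊆ D.verts ∧ ∀ ⦃u v : ℕ⦄, H.Adj u v → D.Adj u v

def ProperSubd (H D : Dgr) : Prop := Subd H D ∧ ¬ Subd D H

/-- a relation is acyclic: no directed cycle through any vertex -/
def Acy (R : ℕ → ℕ → Prop) : Prop := ∀ v, ¬ Relation.TransGen R v v

/-- a `k`-dicolouring: each colour class induces an acyclic subdigraph -/
def IsDicol (D : Dgr) {k : ℕ} (φ : ℕ → Fin k) : Prop :=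
  Acy (fun u v => D.Adj u v ∧ φ u = φ v)

def Dicolourable (D : Dgr) (k : ℕ) : Prop := ∃ φ : ℕ → Fin k, D.IsDicol φ

/-- the dichromatic number -/
noncomputable def dichr (D : Dgr) : ℕ := sInf {k | D.Dicolourable k}

/-- `k`-dicritical digraphs -/
def Dicritical (k : ℕ) (D : Dgr) : Prop :=
  D.dichr = k ∧ ∀ H : Dgr, ProperSubd H D → H.dichr < k

def Bidirected (D : Dgr) : Prop := ∀ ⦃u v : ℕ⦄, D.Adj u v → D.Adj v u

def Oriented (D : Dgr) : Prop := ∀ ⦃u v : ℕ⦄, D.Adj u v → ¬ D.Adj v u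

/-- being a bidirected complete digraph on `n` vertices -/
def IsBidirComplete (n : ℕ) (D : Dgr) : Prop :=
  D.verts.card = n ∧ ∀ u ∈ D.verts, ∀ v ∈ D.verts, u ≠ v → D.Adj u v

/-- a packing of digons (2-sets) and bidirected triangles (3-sets) -/
def IsPacking (D : Dgr) (P : Finset (Finset ℕ)) : Prop :=
  (∀ s ∈ P, (s.card = 2 ∨ s.card = 3) ∧ s ⊆ D.verts ∧
      ∀ u ∈ s, ∀ v ∈ s, u ≠ v → D.Adj u v) ∧
  (P : Set (Finset ℕ)).Pairwise Disjoint

/-- `T(D)`: the maximum of `d + 2t` over packings of `d` digons and `t` bidirected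
triangles; a digon contributes `card - 1 = 1`, a triangle `card - 1 = 2`. -/
noncomputable def TT (D : Dgr) : ℕ :=
  sSup {t | ∃ P : Finset (Finset ℕ), D.IsPacking P ∧ t = ∑ s ∈ P, (s.card - 1)}

/-- vertex deletion -/
def del (D : Dgr) (x : ℕ) : Dgr where
  verts := D.verts.erase x
  Adj u v := D.Adj u v ∧ u ≠ x ∧ v ≠ x
  adj_mem := by
    intro u v h
    exact ⟨Finset.mem_erase.2 ⟨h.2.1, (D.adj_mem h.1).1⟩,
           Finset.mem_erase.2 ⟨h.2.2, (D.adj_mem h.1).2⟩⟩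
  adj_irrefl := fun v h => D.adj_irrefl v h.1

/-- induced subdigraph on a set `S` of vertices -/
def induce (D : Dgr) (S : Finset ℕ) : Dgr where
  verts := D.verts ∩ S
  Adj u v := D.Adj u v ∧ u ∈ S ∧ v ∈ S
  adj_mem := by
    intro u v h
    exact ⟨Finset.mem_inter.2 ⟨(D.adj_mem h.1).1, h.2.1⟩,
           Finset.mem_inter.2 ⟨(D.adj_mem h.1).2, h.2.2⟩⟩
  adj_irrefl := fun v h => D.adj_irrefl v h.1

/-- adding a digon between two (distinct, existing) vertices -/
def addDigon (D : Dgr) (x y : ℕ) : Dgr where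
  verts := D.verts
  Adj u v := D.Adj u v ∨
    (x ≠ y ∧ x ∈ D.verts ∧ y ∈ D.verts ∧ ((u = x ∧ v = y) ∨ (u = y ∧ v = x)))
  adj_mem := by
    intro u v h
    rcases h with h | ⟨_, hx, hy, h | h⟩
    · exact D.adj_mem h
    · exact ⟨h.1 ▸ hx, h.2 ▸ hy⟩
    · exact ⟨h.1 ▸ hy, h.2 ▸ hx⟩
  adj_irrefl := by
    intro v h
    rcases h with h | ⟨hxy, _, _, h | h⟩
    · exact D.adj_irrefl v h
    · exact hxy (h.1.symm.trans h.2)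
    · exact hxy (h.2.symm.trans h.1)

/-- removing the digon `[x,y]` (both arcs) -/
def delDigon (D : Dgr) (x y : ℕ) : Dgr where
  verts := D.verts
  Adj u v := D.Adj u v ∧ ¬(u = x ∧ v = y) ∧ ¬(u = y ∧ v = x)
  adj_mem := by intro u v h; exact D.adj_mem h.1
  adj_irrefl := fun v h => D.adj_irrefl v h.1

/-- `D` is an Ore-composition of `D1` (digon side, replaced digon `[x,y]`) and
`D2` (split side, split vertex `z`). -/
def IsOreComp (D1 D2 D : Dgr) : Prop :=
  Bidirected D1 ∧ Bidirected D2 ∧ Disjoint D1.verts D2.verts ∧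
  ∃ (x y z : ℕ) (Z1 Z2 : Set ℕ),
    x ∈ D1.verts ∧ y ∈ D1.verts ∧ x ≠ y ∧ D1.Adj x y ∧
    z ∈ D2.verts ∧
    Z1 ∪ Z2 = {w | D2.Adj z w} ∧ Disjoint Z1 Z2 ∧ Z1.Nonempty ∧ Z2.Nonempty ∧
    D.verts = D1.verts ∪ D2.verts.erase z ∧
    (∀ u v, D.Adj u v ↔
      (D1.Adj u v ∧ ¬(u = x ∧ v = y) ∧ ¬(u = y ∧ v = x)) ∨
      (D2.Adj u v ∧ u ≠ z ∧ v ≠ z) ∨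
      (u = x ∧ v ∈ Z1 ∧ D2.Adj z v) ∨ (v = x ∧ u ∈ Z1 ∧ D2.Adj u z) ∨
      (u = y ∧ v ∈ Z2 ∧ D2.Adj z v) ∨ (v = y ∧ u ∈ Z2 ∧ D2.Adj u z))

/-- degree of a vertex: in-degree plus out-degree -/
noncomputable def deg (D : Dgr) (v : ℕ) : ℕ :=
  {u | D.Adj v u}.ncard + {u | D.Adj u v}.ncard

end Dgr

open Dgr

/-- the class of 4-Ore digraphs -/
inductive IsOre4 : Dgr → Prop
  | k4 : ∀ D : Dgr, IsBidirComplete 4 D → IsOre4 D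
  | comp : ∀ D1 D2 D : Dgr, IsOre4 D1 → IsOre4 D2 → IsOreComp D1 D2 D → IsOre4 D

namespace Dgr

/-- an emerald: a bidirected triangle all of whose vertices have degree 6 in `D` -/
def IsEmerald (D : Dgr) (s : Finset ℕ) : Prop :=
  s.card = 3 ∧ s ⊆ D.verts ∧ (∀ u ∈ s, ∀ v ∈ s, u ≠ v → D.Adj u v) ∧
  ∀ v ∈ s, D.deg v = 6

/-- a diamond: a bidirected `K4` minus a digon `[x,y]`, the two other vertices
having degree 6 in `D` -/
def IsDiamond (D : Dgr) (s : Finset ℕ) : Prop :=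
  s.card = 4 ∧ s ⊆ D.verts ∧ ∃ x ∈ s, ∃ y ∈ s, x ≠ y ∧
    (∀ u ∈ s, ∀ v ∈ s, u ≠ v → ¬(u = x ∧ v = y) → ¬(u = y ∧ v = x) → D.Adj u v) ∧
    (∀ v ∈ s, v ≠ x → v ≠ y → D.deg v = 6)

/-- boundary of an induced subdigraph given by its vertex set `S` -/
def bdry (D : Dgr) (S : Finset ℕ) : Set ℕ :=
  {v | v ∈ S ∧ ∃ u ∈ D.verts, u ∉ S ∧ (D.Adj u v ∨ D.Adj v u)}

/-- Ore-collapsible induced subdigraph, given by its vertex set -/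
def OreCollapsible (D : Dgr) (S : Finset ℕ) : Prop :=
  S ⊆ D.verts ∧ S.card < D.verts.card ∧
  ∃ u v : ℕ, u ≠ v ∧ D.bdry S = {u, v} ∧ IsOre4 ((D.induce S).addDigon u v)

/-- the potential of a digraph, with respect to parameters ε and δ -/
noncomputable def pot (D : Dgr) (ε δ : ℝ) : ℝ :=
  (10/3 + ε) * (D.nV : ℝ) - (D.nA : ℝ) - δ * (D.TT : ℝ)

end Dgr

/-- `Ore4From J D`: `D` is obtained from `J` by successive Ore-compositions with
4-Ore digraphs, with `J` always on the digon side. -/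
inductive Ore4From (J : Dgr) : Dgr → Prop
  | base : Ore4From J J
  | comp (D1 D2 D : Dgr) : Ore4From J D1 → IsOre4 D2 → Dgr.IsOreComp D1 D2 D →
      Ore4From J D


section Aux
open Relation

lemma acy_of_proper {A : ℕ → ℕ → Prop} {k : ℕ} {φ : ℕ → Fin k}
    (h : ∀ u w, A u w → φ u ≠ φ w) :
    Dgr.Acy (fun u w => A u w ∧ φ u = φ w) := by
  intro a hc
  cases hc with
  | single h' => exact h _ _ h'.1 h'.2
  | tail _ h' => exact h _ _ h'.1 h'.2

lemma bid_of_complete {n : ℕ} {D : Dgr} (h : D.IsBidirComplete n) :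
    D.Bidirected := by
  intro u w huw
  have hm := D.adj_mem huw
  have hne : u ≠ w := fun e => D.adj_irrefl u (e ▸ huw)
  exact h.2 w hm.2 u hm.1 hne.symm

lemma bid_comp {D1 D2 D : Dgr} (hc : D1.IsOreComp D2 D) : D.Bidirected := by
  obtain ⟨bid1, bid2, _, x, y, z, Z1, Z2, _, _, _, _, _, _, _, _, _, _, hA⟩ := hc
  intro u w huw
  rw [hA] at huw
  rw [hA]
  rcases huw with ⟨h1, h2, h3⟩ | ⟨h1, h2, h3⟩ | ⟨h1, h2, h3⟩ | ⟨h1, h2, h3⟩ |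
      ⟨h1, h2, h3⟩ | ⟨h1, h2, h3⟩
  · exact Or.inl ⟨bid1 h1, fun ⟨e1, e2⟩ => h3 ⟨e2, e1⟩, fun ⟨e1, e2⟩ => h2 ⟨e2, e1⟩⟩
  · exact Or.inr (Or.inl ⟨bid2 h1, h3, h2⟩)
  · exact Or.inr (Or.inr (Or.inr (Or.inl ⟨h1, h2, bid2 h3⟩)))
  · exact Or.inr (Or.inr (Or.inl ⟨h1, h2, bid2 h3⟩))
  · exact Or.inr (Or.inr (Or.inr (Or.inr (Or.inr ⟨h1, h2, bid2 h3⟩))))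
  · exact Or.inr (Or.inr (Or.inr (Or.inr (Or.inl ⟨h1, h2, bid2 h3⟩))))

lemma ore4_bid {D : Dgr} (h : IsOre4 D) : D.Bidirected := by
  induction h with
  | k4 D hD => exact bid_of_complete hD
  | comp D1 D2 D h1 h2 hc ih1 ih2 => exact bid_comp hc

lemma ore4From_bid {J D : Dgr} (hJ : J.Bidirected) (h : Ore4From J D) :
    D.Bidirected := by
  induction h with
  | base => exact hJ
  | comp D1 D2 D h1 h2 hc ih => exact bid_comp hc

lemma ore4From_sub {J D : Dgr} (h : Ore4From J D) : J.verts ⊆ D.verts := by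
  induction h with
  | base => exact subset_rfl
  | comp D1 D2 D h1 h2 hc ih =>
    obtain ⟨_, _, _, x, y, z, Z1, Z2, _, _, _, _, _, _, _, _, _, hV, _⟩ := hc
    rw [hV]
    exact ih.trans Finset.subset_union_left

lemma ore4_not3 {D : Dgr} (h : IsOre4 D) : ¬ D.Dicolourable 3 := by
  induction h with
  | k4 D hD =>
    rintro ⟨φ, hφ⟩
    have hcard : (Finset.univ : Finset (Fin 3)).card < D.verts.card := by
      rw [hD.1]; simp
    obtain ⟨a, ha, b, hb, hab, heq⟩ :=
      Finset.exists_ne_map_eq_of_card_lt_of_maps_to hcard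
        (fun u _ => Finset.mem_univ (φ u))
    exact hφ a (Relation.TransGen.head ⟨hD.2 a ha b hb hab, heq⟩
      (Relation.TransGen.single ⟨hD.2 b hb a ha hab.symm, heq.symm⟩))
  | comp D1 D2 D h1 h2 hc ih1 ih2 =>
    rintro ⟨φ, hφ⟩
    have hbidD := bid_comp hc
    have noD : ∀ p q, D.Adj p q → φ p ≠ φ q := fun p q hpq e =>
      hφ p (Relation.TransGen.head ⟨hpq, e⟩
        (Relation.TransGen.single ⟨hbidD hpq, e.symm⟩))
    obtain ⟨bid1, bid2, hdisj, x, y, z, Z1, Z2, hx, hy, hxy, hxyadj, hz, hZ,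
      hZd, hZ1, hZ2, hV, hA⟩ := hc
    by_cases hcxy : φ x = φ y
    · apply ih2
      refine ⟨fun w => if w = z then φ x else φ w, acy_of_proper ?_⟩
      intro p q hpq heq
      by_cases hp : p = z
      · have hADJ : D2.Adj z q := hp ▸ hpq
        have hq : q ≠ z := fun e => D2.adj_irrefl z (e ▸ hADJ)
        rw [if_pos hp, if_neg hq] at heq
        have hqZ : q ∈ Z1 ∪ Z2 := by rw [hZ]; exact hADJ
        rcases hqZ with hq1 | hq2
        · exact noD x q ((hA x q).2 (Or.inr (Or.inr (Or.inl ⟨rfl, hq1, hADJ⟩)))) heq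
        · exact noD y q ((hA y q).2 (Or.inr (Or.inr (Or.inr (Or.inr
            (Or.inl ⟨rfl, hq2, hADJ⟩)))))) (hcxy.symm.trans heq)
      · by_cases hq : q = z
        · have hADJ : D2.Adj p z := hq ▸ hpq
          have hpZ : p ∈ Z1 ∪ Z2 := by rw [hZ]; exact bid2 hADJ
          rw [if_neg hp, if_pos hq] at heq
          rcases hpZ with h1' | h2'
          · exact noD p x ((hA p x).2 (Or.inr (Or.inr (Or.inr
              (Or.inl ⟨rfl, h1', hADJ⟩))))) heq
          · exact noD p y ((hA p y).2 (Or.inr (Or.inr (Or.inr (Or.inr (Or.inr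
              ⟨rfl, h2', hADJ⟩)))))) (heq.trans hcxy)
        · rw [if_neg hp, if_neg hq] at heq
          exact noD p q ((hA p q).2 (Or.inr (Or.inl ⟨hpq, hp, hq⟩))) heq
    · apply ih1
      refine ⟨φ, acy_of_proper ?_⟩
      intro p q hpq heq
      have hd1 : ¬(p = x ∧ q = y) := fun ⟨e1, e2⟩ => hcxy (e1 ▸ e2 ▸ heq)
      have hd2 : ¬(p = y ∧ q = x) := fun ⟨e1, e2⟩ =>
        hcxy ((e1 ▸ e2 ▸ heq).symm)
      exact noD p q ((hA p q).2 (Or.inl ⟨hpq, hd1, hd2⟩)) heq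

end Aux

/-- if `D` is obtained from a copy `J` of the bidirected `K4` by
successive Ore-compositions (with `J` on the digon side) and `v ∈ V(J)`, then in
every 3-dicolouring of `D - v` the vertices of `J - v` get pairwise distinct
colours. -/
theorem stmt_11 (J D : Dgr) (hJ : Dgr.IsBidirComplete 4 J) (h : Ore4From J D)
    (v : ℕ) (hv : v ∈ J.verts)
    (φ : ℕ → Fin 3) (hφ : (D.del v).IsDicol φ) :
    ∀ a ∈ J.verts, ∀ b ∈ J.verts, a ≠ v → b ≠ v → a ≠ b → φ a ≠ φ b := by
  revert φ
  induction h with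
  | base =>
    intro φ hφ a ha b hb hav hbv hab heq
    exact hφ a (Relation.TransGen.head ⟨⟨hJ.2 a ha b hb hab, hav, hbv⟩, heq⟩
      (Relation.TransGen.single ⟨⟨hJ.2 b hb a ha hab.symm, hbv, hav⟩, heq.symm⟩))
  | comp D1 D2 D h1 h2 hc ih =>
    intro φ hφ
    have hbidD := bid_comp hc
    have noD : ∀ p q, D.Adj p q → p ≠ v → q ≠ v → φ p ≠ φ q :=
      fun p q hpq hp hq e =>
        hφ p (Relation.TransGen.head ⟨⟨hpq, hp, hq⟩, e⟩
          (Relation.TransGen.single ⟨⟨hbidD hpq, hq, hp⟩, e.symm⟩))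
    have hsub1 : J.verts ⊆ D1.verts := ore4From_sub h1
    obtain ⟨bid1, bid2, hdisj, x, y, z, Z1, Z2, hx, hy, hxy, hxyadj, hz, hZ,
      hZd, hZ1, hZ2, hV, hA⟩ := hc
    have hvD2 : v ∉ D2.verts := fun hmem =>
      (Finset.disjoint_left.1 hdisj (hsub1 hv)) hmem
    apply ih
    apply acy_of_proper
    intro p q hpq heq
    obtain ⟨hpq1, hp, hq⟩ := hpq
    by_cases hd : (p = x ∧ q = y) ∨ (p = y ∧ q = x)
    · have key : φ x = φ y ∧ x ≠ v ∧ y ≠ v := by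
        rcases hd with ⟨e1, e2⟩ | ⟨e1, e2⟩ <;> subst e1 <;> subst e2
        · exact ⟨heq, hp, hq⟩
        · exact ⟨heq.symm, hq, hp⟩
      obtain ⟨hcxy, hxv, hyv⟩ := key
      exfalso
      apply ore4_not3 h2
      refine ⟨fun w => if w = z then φ x else φ w, acy_of_proper ?_⟩
      intro p' q' hpq' heq'
      by_cases hp' : p' = z
      · have hADJ : D2.Adj z q' := hp' ▸ hpq'
        have hq' : q' ≠ z := fun e => D2.adj_irrefl z (e ▸ hADJ)
        rw [if_pos hp', if_neg hq'] at heq'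
        have hq'v : q' ≠ v := fun e => hvD2 (e ▸ (D2.adj_mem hADJ).2)
        have hqZ : q' ∈ Z1 ∪ Z2 := by rw [hZ]; exact hADJ
        rcases hqZ with hq1 | hq2
        · exact noD x q' ((hA x q').2 (Or.inr (Or.inr
            (Or.inl ⟨rfl, hq1, hADJ⟩)))) hxv hq'v heq'
        · exact noD y q' ((hA y q').2 (Or.inr (Or.inr (Or.inr (Or.inr
            (Or.inl ⟨rfl, hq2, hADJ⟩)))))) hyv hq'v (hcxy.symm.trans heq')
      · by_cases hq' : q' = z
        · have hADJ : D2.Adj p' z := hq' ▸ hpq'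
          have hpZ : p' ∈ Z1 ∪ Z2 := by rw [hZ]; exact bid2 hADJ
          rw [if_neg hp', if_pos hq'] at heq'
          have hp'v : p' ≠ v := fun e => hvD2 (e ▸ (D2.adj_mem hADJ).1)
          rcases hpZ with h1' | h2'
          · exact noD p' x ((hA p' x).2 (Or.inr (Or.inr (Or.inr
              (Or.inl ⟨rfl, h1', hADJ⟩))))) hp'v hxv heq'
          · exact noD p' y ((hA p' y).2 (Or.inr (Or.inr (Or.inr (Or.inr
              (Or.inr ⟨rfl, h2', hADJ⟩)))))) hp'v hyv (heq'.trans hcxy)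
        · rw [if_neg hp', if_neg hq'] at heq'
          have hmp : p' ≠ v := fun e => hvD2 (e ▸ (D2.adj_mem hpq').1)
          have hmq : q' ≠ v := fun e => hvD2 (e ▸ (D2.adj_mem hpq').2)
          exact noD p' q' ((hA p' q').2 (Or.inr
            (Or.inl ⟨hpq', hp', hq'⟩))) hmp hmq heq'
    · have hd1 : ¬(p = x ∧ q = y) := fun h' => hd (Or.inl h')
      have hd2 : ¬(p = y ∧ q = x) := fun h' => hd (Or.inr h')
      exact noD p q ((hA p q).2 (Or.inl ⟨hpq1, hd1, hd2⟩)) hp hq heq
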